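/- Let b : ℝ → ℝ be locally Lipschitz, nonnegative and nondecreasing, and for α, β > 0 set T(α,β) := ∫_α^∞ ds / (β² + 2∫_α^s b(r) dr)^{1/2} (with the convention 1/0 = ∞). If T(α₀, β₀) < ∞ for some α₀ > 0 and β₀ > 0, then T(α, β) < ∞ for all α > 0 and β > 0. -/

import Mathlib

open MeasureTheory Set

/-- `T(α,β) = ∫_α^∞ ds / (β² + 2∫_α^s b(r) dr)^{1/2}`, valued in `[0,∞]`
(with the convention `1/0 = ∞`, which is irrelevant here since the integrand's
denominator is positive when `β > 0`). -/
noncomputable def blowupTime (b : ℝ → ℝ) (α β : ℝ) : ENNReal :=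
  ∫⁻ s in Set.Ioi α, ENNReal.ofReal (1 / Real.sqrt (β ^ 2 + 2 * ∫ r in α..s, b r))

/-- If `T(α₀,β₀) < ∞` for some `α₀, β₀ > 0`, then `T(α,β) < ∞` for all
`α, β > 0`. -/
theorem blowupTime_finite_of_finite (b : ℝ → ℝ) (hb : LocallyLipschitz b)
    (hb_nonneg : ∀ x, 0 ≤ b x) (hb_mono : Monotone b)
    (α₀ β₀ : ℝ) (hα₀ : 0 < α₀) (hβ₀ : 0 < β₀)
    (hfin : blowupTime b α₀ β₀ < ⊤) :
    ∀ α β : ℝ, 0 < α → 0 < β → blowupTime b α β < ⊤ := by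
  intro α β hα hβ
  have hbc : Continuous b := hb.continuous
  have hbi : ∀ a c : ℝ, IntervalIntegrable b volume a c := fun a c =>
    hbc.intervalIntegrable a c
  set g : ℝ → ℝ := fun s => ∫ r in α₀..s, b r with hg_def
  have hg_cont : Continuous g := intervalIntegral.continuous_primitive hbi α₀
  have hint_nonneg : ∀ a c : ℝ, a ≤ c → 0 ≤ ∫ r in a..c, b r := fun a c hac =>
    intervalIntegral.integral_nonneg hac fun x _ => hb_nonneg x
  have hg_mono : Monotone g := by
    intro s t hst
    have h1 := intervalIntegral.integral_add_adjacent_intervals (hbi α₀ s) (hbi s t)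
    have h2 := hint_nonneg s t hst
    simp only [hg_def]
    linarith
  -- the integrand at (α₀, β₀)
  set f₀ : ℝ → ENNReal :=
    fun s => ENNReal.ofReal (1 / Real.sqrt (β₀ ^ 2 + 2 * ∫ r in α₀..s, b r)) with hf₀_def
  have hf₀_meas : Measurable f₀ := by
    have h1 : Continuous fun s => Real.sqrt (β₀ ^ 2 + 2 * g s) :=
      Real.continuous_sqrt.comp (continuous_const.add (continuous_const.mul hg_cont))
    have h2 : Measurable fun s => 1 / Real.sqrt (β₀ ^ 2 + 2 * g s) := by
      simpa only [one_div, Pi.inv_def] using h1.measurable.inv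
    exact h2.ennreal_ofReal
  have hfin' : (∫⁻ s in Set.Ioi α₀, f₀ s) < ⊤ := hfin
  -- g is unbounded
  have hunb : ∀ K : ℝ, ∃ s : ℝ, K ≤ g s := by
    intro K
    by_contra hcon
    push_neg at hcon
    have hK : 0 < K := lt_of_le_of_lt (le_of_eq (by simp [hg_def])) (hcon α₀)
    have hden : (0:ℝ) < β₀ ^ 2 + 2 * K := by positivity
    have hlow : ∀ s ∈ Set.Ioi α₀,
        ENNReal.ofReal (1 / Real.sqrt (β₀ ^ 2 + 2 * K)) ≤ f₀ s := by
      intro s hs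
      apply ENNReal.ofReal_le_ofReal
      apply one_div_le_one_div_of_le
      · exact Real.sqrt_pos.mpr (by nlinarith [hint_nonneg α₀ s (le_of_lt hs), pow_pos hβ₀ 2])
      · exact Real.sqrt_le_sqrt (by have := (hcon s).le; simp only [hg_def] at this; nlinarith)
    have hle : (∫⁻ _ in Set.Ioi α₀, ENNReal.ofReal (1 / Real.sqrt (β₀ ^ 2 + 2 * K)))
        ≤ ∫⁻ s in Set.Ioi α₀, f₀ s := setLIntegral_mono hf₀_meas hlow
    rw [setLIntegral_const, Real.volume_Ioi, ENNReal.mul_top] at hle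
    · exact absurd (lt_of_le_of_lt hle hfin') (by simp)
    · simp only [ne_eq, ENNReal.ofReal_eq_zero, not_le]
      positivity
  -- constants
  set C : ℝ := ∫ r in α..α₀, b r with hC_def
  obtain ⟨s₀, hs₀⟩ := hunb (max 0 (β₀ ^ 2 / 2 - β ^ 2 - 2 * C))
  set M : ℝ := max (max α α₀) s₀ with hM_def
  have hαM : α ≤ M := le_trans (le_max_left _ _) (le_max_left _ _)
  have hα₀M : α₀ ≤ M := le_trans (le_max_right _ _) (le_max_left _ _)
  have hgM : ∀ s, M ≤ s → max 0 (β₀ ^ 2 / 2 - β ^ 2 - 2 * C) ≤ g s := fun s hs =>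
    le_trans hs₀ (hg_mono (le_trans (le_max_right _ _) hs))
  set f : ℝ → ENNReal :=
    fun s => ENNReal.ofReal (1 / Real.sqrt (β ^ 2 + 2 * ∫ r in α..s, b r)) with hf_def
  -- split point
  have hsplit : Set.Ioi α = Set.Ioc α M ∪ Set.Ioi M := (Set.Ioc_union_Ioi_eq_Ioi hαM).symm
  have key : blowupTime b α β ≤ (∫⁻ s in Set.Ioc α M, f s) + ∫⁻ s in Set.Ioi M, f s := by
    rw [blowupTime, hsplit]
    exact lintegral_union_le _ _ _
  -- first piece: bounded integrand on a finite interval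
  have h1 : (∫⁻ s in Set.Ioc α M, f s) < ⊤ := by
    have hb1 : ∀ s ∈ Set.Ioc α M, f s ≤ ENNReal.ofReal (1 / β) := by
      intro s hs
      apply ENNReal.ofReal_le_ofReal
      have hnn : 0 ≤ ∫ r in α..s, b r := hint_nonneg α s hs.1.le
      apply one_div_le_one_div_of_le hβ
      calc β = Real.sqrt (β ^ 2) := by
              rw [Real.sqrt_sq hβ.le]
        _ ≤ _ := Real.sqrt_le_sqrt (by linarith)
    calc (∫⁻ s in Set.Ioc α M, f s) ≤ ∫⁻ _ in Set.Ioc α M, ENNReal.ofReal (1 / β) :=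
          setLIntegral_mono measurable_const hb1
      _ = ENNReal.ofReal (1 / β) * volume (Set.Ioc α M) := setLIntegral_const _ _
      _ < ⊤ := ENNReal.mul_lt_top ENNReal.ofReal_lt_top (measure_Ioc_lt_top)
  -- second piece: compare with f₀
  have h2 : (∫⁻ s in Set.Ioi M, f s) < ⊤ := by
    have hcmp : ∀ s ∈ Set.Ioi M, f s ≤ ENNReal.ofReal (Real.sqrt 2) * f₀ s := by
      intro s hs
      have hgs := hgM s (le_of_lt hs)
      have hgs0 : (0:ℝ) ≤ g s := le_trans (le_max_left _ _) hgs
      have hgs1 : β₀ ^ 2 / 2 - β ^ 2 - 2 * C ≤ g s := le_trans (le_max_right _ _) hgs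
      have hadd : (∫ r in α..s, b r) = C + g s :=
        (intervalIntegral.integral_add_adjacent_intervals (hbi α α₀) (hbi α₀ s)).symm
      have hD₀pos : (0:ℝ) < β₀ ^ 2 + 2 * g s := by positivity
      have hDhalf : (β₀ ^ 2 + 2 * g s) / 2 ≤ β ^ 2 + 2 * ∫ r in α..s, b r := by
        rw [hadd]; linarith
      rw [hf_def, hf₀_def, ← ENNReal.ofReal_mul (Real.sqrt_nonneg 2)]
      apply ENNReal.ofReal_le_ofReal
      have hsq : Real.sqrt ((β₀ ^ 2 + 2 * g s) / 2) ≤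
          Real.sqrt (β ^ 2 + 2 * ∫ r in α..s, b r) := Real.sqrt_le_sqrt hDhalf
      have hsqpos : 0 < Real.sqrt ((β₀ ^ 2 + 2 * g s) / 2) :=
        Real.sqrt_pos.mpr (by positivity)
      have h3 : 1 / Real.sqrt (β ^ 2 + 2 * ∫ r in α..s, b r)
          ≤ 1 / Real.sqrt ((β₀ ^ 2 + 2 * g s) / 2) :=
        one_div_le_one_div_of_le hsqpos hsq
      have h4 : Real.sqrt ((β₀ ^ 2 + 2 * g s) / 2)
          = Real.sqrt (β₀ ^ 2 + 2 * g s) / Real.sqrt 2 :=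
        Real.sqrt_div hD₀pos.le 2
      rw [h4] at h3
      have h5 : 1 / (Real.sqrt (β₀ ^ 2 + 2 * g s) / Real.sqrt 2)
          = Real.sqrt 2 * (1 / Real.sqrt (β₀ ^ 2 + 2 * g s)) := by
        field_simp
      rw [h5] at h3
      simpa [hg_def] using h3
    calc (∫⁻ s in Set.Ioi M, f s)
        ≤ ∫⁻ s in Set.Ioi M, ENNReal.ofReal (Real.sqrt 2) * f₀ s :=
          setLIntegral_mono (measurable_const.mul hf₀_meas) hcmp
      _ = ENNReal.ofReal (Real.sqrt 2) * ∫⁻ s in Set.Ioi M, f₀ s :=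
          lintegral_const_mul _ hf₀_meas
      _ ≤ ENNReal.ofReal (Real.sqrt 2) * ∫⁻ s in Set.Ioi α₀, f₀ s := by
          gcongr
      _ < ⊤ := ENNReal.mul_lt_top ENNReal.ofReal_lt_top hfin'
  exact lt_of_le_of_lt key (ENNReal.add_lt_top.mpr ⟨h1, h2⟩)
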